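/- Let θ ∈ [0,1] and let X, Y, Z be real-valued random variables on a common probability space, each with continuous cdf and admitting a probability density function with respect to Lebesgue measure. Then the distance d_θ satisfies the triangle inequality: d_θ(X,Z) ≤ d_θ(X,Y) + d_θ(Y,Z), where d_θ(·,·) denotes the nonnegative square root of d_θ²(·,·). -/

import Mathlib

open MeasureTheory Set
open scoped ENNReal NNReal

/-- The cdf of a real random variable `X` on `(Ω, μ)`. -/
noncomputable def cdfOf {Ω : Type*} [MeasurableSpace Ω] (μ : Measure Ω) (X : Ω → ℝ) :
    ℝ → ℝ :=
  fun x => (μ {ω | X ω ≤ x}).toReal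

/-- The squared dependence distance `d₁²(X,Y) = 3·E[(G_X(X) − G_Y(Y))²]`. -/
noncomputable def d1sq {Ω : Type*} [MeasurableSpace Ω] (μ : Measure Ω) (X Y : Ω → ℝ) : ℝ :=
  3 * ∫ ω, (cdfOf μ X (X ω) - cdfOf μ Y (Y ω)) ^ 2 ∂μ

/-- The squared Hellinger distance `d₀²(f,g) = (1/2)·∫(√f − √g)² dλ` between densities. -/
noncomputable def d0sq (f g : ℝ → ℝ) : ℝ :=
  (1 / 2) * ∫ x, (Real.sqrt (f x) - Real.sqrt (g x)) ^ 2

/-- The distance `d_θ(X,Y)`, the square root of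
`θ·d₁²(X,Y) + (1−θ)·d₀²(f,g)`, where `f`, `g` are densities of `X`, `Y`. -/
noncomputable def dtheta {Ω : Type*} [MeasurableSpace Ω] (μ : Measure Ω)
    (θ : ℝ) (X Y : Ω → ℝ) (f g : ℝ → ℝ) : ℝ :=
  Real.sqrt (θ * d1sq μ X Y + (1 - θ) * d0sq f g)

/-- toReal of the L² seminorm equals the square root of the integral of the square. -/
lemma eLpNorm_two_toReal {Ω : Type*} [MeasurableSpace Ω] {μ : Measure Ω}
    {h : Ω → ℝ} (hh : MemLp h 2 μ) :
    (eLpNorm h 2 μ).toReal = Real.sqrt (∫ ω, (h ω) ^ 2 ∂μ) := by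
  rw [hh.eLpNorm_eq_integral_rpow_norm two_ne_zero ENNReal.ofNat_ne_top]
  have h2 : ((2 : ℝ≥0∞)).toReal = (2 : ℝ) := by simp
  rw [h2]
  have hint : ∫ ω, ‖h ω‖ ^ (2 : ℝ) ∂μ = ∫ ω, (h ω) ^ 2 ∂μ := by
    congr 1 with ω
    rw [show ((2:ℝ)) = ((2:ℕ) : ℝ) by norm_num, Real.rpow_natCast]
    simp [sq_abs]
  rw [hint, ENNReal.toReal_ofReal (by positivity), Real.sqrt_eq_rpow]
  norm_num

/-- L² triangle inequality for integrals. -/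
lemma L2_tri {Ω : Type*} [MeasurableSpace Ω] {μ : Measure Ω}
    {a b : Ω → ℝ} (ha : MemLp a 2 μ) (hb : MemLp b 2 μ) :
    Real.sqrt (∫ ω, (a ω + b ω) ^ 2 ∂μ)
      ≤ Real.sqrt (∫ ω, (a ω) ^ 2 ∂μ) + Real.sqrt (∫ ω, (b ω) ^ 2 ∂μ) := by
  have htri := eLpNorm_add_le ha.aestronglyMeasurable hb.aestronglyMeasurable one_le_two
  have h1 := ENNReal.toReal_le_add htri ha.eLpNorm_ne_top hb.eLpNorm_ne_top
  rwa [eLpNorm_two_toReal (ha.add hb), eLpNorm_two_toReal ha, eLpNorm_two_toReal hb] at h1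

/-- 2D weighted Minkowski-type inequality. -/
lemma key_ineq (c d A A1 A2 B B1 B2 : ℝ) (hc : 0 ≤ c) (hd : 0 ≤ d)
    (hA1 : 0 ≤ A1) (hA2 : 0 ≤ A2) (hB1 : 0 ≤ B1) (hB2 : 0 ≤ B2)
    (hA : 0 ≤ A) (hB : 0 ≤ B) (hAt : A ≤ A1 + A2) (hBt : B ≤ B1 + B2) :
    Real.sqrt (c * A ^ 2 + d * B ^ 2)
      ≤ Real.sqrt (c * A1 ^ 2 + d * B1 ^ 2) + Real.sqrt (c * A2 ^ 2 + d * B2 ^ 2) := by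
  set P := c * A1 ^ 2 + d * B1 ^ 2 with hP
  set Q := c * A2 ^ 2 + d * B2 ^ 2 with hQ
  have hP0 : 0 ≤ P := by positivity
  have hQ0 : 0 ≤ Q := by positivity
  have hcross_sq : (c * A1 * A2 + d * B1 * B2) ^ 2 ≤ P * Q := by
    have := mul_nonneg (mul_nonneg hc hd) (sq_nonneg (A1 * B2 - A2 * B1))
    nlinarith [sq_nonneg (A1*A2), sq_nonneg (B1*B2)]
  have hcross0 : 0 ≤ c * A1 * A2 + d * B1 * B2 := by positivity
  have hcross : c * A1 * A2 + d * B1 * B2 ≤ Real.sqrt (P * Q) := by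
    have := Real.sqrt_le_sqrt hcross_sq
    rwa [Real.sqrt_sq hcross0] at this
  have hstep : c * A ^ 2 + d * B ^ 2 ≤ (Real.sqrt P + Real.sqrt Q) ^ 2 := by
    have e1 : (Real.sqrt P + Real.sqrt Q) ^ 2
        = P + Q + 2 * Real.sqrt (P * Q) := by
      rw [add_sq, Real.sq_sqrt hP0, Real.sq_sqrt hQ0, Real.sqrt_mul hP0]
      ring
    have h2 : c * A ^ 2 ≤ c * (A1 + A2) ^ 2 :=
      mul_le_mul_of_nonneg_left (pow_le_pow_left₀ hA hAt 2) hc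
    have h3 : d * B ^ 2 ≤ d * (B1 + B2) ^ 2 :=
      mul_le_mul_of_nonneg_left (pow_le_pow_left₀ hB hBt 2) hd
    rw [e1]
    nlinarith
  calc Real.sqrt (c * A ^ 2 + d * B ^ 2)
      ≤ Real.sqrt ((Real.sqrt P + Real.sqrt Q) ^ 2) := Real.sqrt_le_sqrt hstep
    _ = Real.sqrt P + Real.sqrt Q := Real.sqrt_sq (by positivity)

lemma memLp_cdf_comp {Ω : Type*} [MeasurableSpace Ω] (μ : Measure Ω) [IsProbabilityMeasure μ]
    (X : Ω → ℝ) (hX : Measurable X) (hGXc : Continuous (cdfOf μ X)) :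
    MemLp (fun ω => cdfOf μ X (X ω)) 2 μ := by
  have hm : Measurable (fun ω => cdfOf μ X (X ω)) := hGXc.measurable.comp hX
  have h01 : ∀ t : ℝ, ‖cdfOf μ X t‖ ≤ 1 := by
    intro t
    simp only [cdfOf]
    rw [Real.norm_eq_abs, abs_of_nonneg ENNReal.toReal_nonneg]
    exact ENNReal.toReal_le_of_le_ofReal zero_le_one (by simpa using prob_le_one)
  exact MemLp.of_bound hm.aestronglyMeasurable 1
    (Filter.Eventually.of_forall fun ω => h01 (X ω))

lemma memLp_sqrt_density {Ω : Type*} [MeasurableSpace Ω] (μ : Measure Ω) [IsProbabilityMeasure μ]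
    (X : Ω → ℝ) (hX : Measurable X) (f : ℝ → ℝ) (hf : Measurable f) (hf0 : ∀ x, 0 ≤ f x)
    (hXd : Measure.map X μ = volume.withDensity (fun x => ENNReal.ofReal (f x))) :
    MemLp (fun x => Real.sqrt (f x)) 2 volume := by
  have hmeas : Measurable (fun x => Real.sqrt (f x)) :=
    Real.continuous_sqrt.measurable.comp hf
  rw [memLp_two_iff_integrable_sq hmeas.aestronglyMeasurable]
  have heq : (fun x => Real.sqrt (f x) ^ 2) = f := by
    funext x; exact Real.sq_sqrt (hf0 x)
  rw [heq]
  refine ⟨hf.aestronglyMeasurable, ?_⟩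
  rw [HasFiniteIntegral]
  have hnorm : ∀ x, (‖f x‖₊ : ℝ≥0∞) = ENNReal.ofReal (f x) := fun x => by
    rw [← enorm_eq_nnnorm, ← ofReal_norm, Real.norm_eq_abs, abs_of_nonneg (hf0 x)]
  calc ∫⁻ x, (‖f x‖₊ : ℝ≥0∞) = ∫⁻ x, ENNReal.ofReal (f x) := by simp_rw [hnorm]
    _ = (volume.withDensity (fun x => ENNReal.ofReal (f x))) univ := by
        rw [withDensity_apply _ MeasurableSet.univ, setLIntegral_univ]
    _ = (Measure.map X μ) univ := by rw [hXd]
    _ = 1 := by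
        have : IsProbabilityMeasure (Measure.map X μ) :=
          Measure.isProbabilityMeasure_map hX.aemeasurable
        exact measure_univ
    _ < ⊤ := ENNReal.one_lt_top

/-- `d_θ` satisfies the triangle inequality
`d_θ(X,Z) ≤ d_θ(X,Y) + d_θ(Y,Z)` for random variables with continuous cdfs and
densities `f`, `g`, `k`. -/
theorem dtheta_triangle
    {Ω : Type*} [MeasurableSpace Ω] (μ : Measure Ω) [IsProbabilityMeasure μ]
    (θ : ℝ) (hθ0 : 0 ≤ θ) (hθ1 : θ ≤ 1)
    (X Y Z : Ω → ℝ) (hX : Measurable X) (hY : Measurable Y) (hZ : Measurable Z)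
    (f g k : ℝ → ℝ) (hf : Measurable f) (hg : Measurable g) (hk : Measurable k)
    (hf0 : ∀ x, 0 ≤ f x) (hg0 : ∀ x, 0 ≤ g x) (hk0 : ∀ x, 0 ≤ k x)
    (hXd : Measure.map X μ = volume.withDensity (fun x => ENNReal.ofReal (f x)))
    (hYd : Measure.map Y μ = volume.withDensity (fun x => ENNReal.ofReal (g x)))
    (hZd : Measure.map Z μ = volume.withDensity (fun x => ENNReal.ofReal (k x)))
    (hGXc : Continuous (cdfOf μ X)) (hGYc : Continuous (cdfOf μ Y))
    (hGZc : Continuous (cdfOf μ Z)) :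
    dtheta μ θ X Z f k ≤ dtheta μ θ X Y f g + dtheta μ θ Y Z g k := by
  have hu : MemLp (fun ω => cdfOf μ X (X ω)) 2 μ := memLp_cdf_comp μ X hX hGXc
  have hv : MemLp (fun ω => cdfOf μ Y (Y ω)) 2 μ := memLp_cdf_comp μ Y hY hGYc
  have hw : MemLp (fun ω => cdfOf μ Z (Z ω)) 2 μ := memLp_cdf_comp μ Z hZ hGZc
  have hsf : MemLp (fun x => Real.sqrt (f x)) 2 volume :=
    memLp_sqrt_density μ X hX f hf hf0 hXd
  have hsg : MemLp (fun x => Real.sqrt (g x)) 2 volume :=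
    memLp_sqrt_density μ Y hY g hg hg0 hYd
  have hsk : MemLp (fun x => Real.sqrt (k x)) 2 volume :=
    memLp_sqrt_density μ Z hZ k hk hk0 hZd
  have hAt : Real.sqrt (∫ ω, (cdfOf μ X (X ω) - cdfOf μ Z (Z ω)) ^ 2 ∂μ)
      ≤ Real.sqrt (∫ ω, (cdfOf μ X (X ω) - cdfOf μ Y (Y ω)) ^ 2 ∂μ)
        + Real.sqrt (∫ ω, (cdfOf μ Y (Y ω) - cdfOf μ Z (Z ω)) ^ 2 ∂μ) := by
    have := L2_tri (hu.sub hv) (hv.sub hw)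
    simpa [sub_add_sub_cancel] using this
  have hBt : Real.sqrt (∫ x, (Real.sqrt (f x) - Real.sqrt (k x)) ^ 2)
      ≤ Real.sqrt (∫ x, (Real.sqrt (f x) - Real.sqrt (g x)) ^ 2)
        + Real.sqrt (∫ x, (Real.sqrt (g x) - Real.sqrt (k x)) ^ 2) := by
    have := L2_tri (hsf.sub hsg) (hsg.sub hsk)
    simpa [sub_add_sub_cancel] using this
  set IA := ∫ ω, (cdfOf μ X (X ω) - cdfOf μ Z (Z ω)) ^ 2 ∂μ with hIAdef
  set IA1 := ∫ ω, (cdfOf μ X (X ω) - cdfOf μ Y (Y ω)) ^ 2 ∂μ with hIA1def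
  set IA2 := ∫ ω, (cdfOf μ Y (Y ω) - cdfOf μ Z (Z ω)) ^ 2 ∂μ with hIA2def
  set IB := ∫ x, (Real.sqrt (f x) - Real.sqrt (k x)) ^ 2 with hIBdef
  set IB1 := ∫ x, (Real.sqrt (f x) - Real.sqrt (g x)) ^ 2 with hIB1def
  set IB2 := ∫ x, (Real.sqrt (g x) - Real.sqrt (k x)) ^ 2 with hIB2def
  have hIA : 0 ≤ IA := integral_nonneg fun ω => sq_nonneg _
  have hIA1 : 0 ≤ IA1 := integral_nonneg fun ω => sq_nonneg _
  have hIA2 : 0 ≤ IA2 := integral_nonneg fun ω => sq_nonneg _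
  have hIB : 0 ≤ IB := integral_nonneg fun x => sq_nonneg _
  have hIB1 : 0 ≤ IB1 := integral_nonneg fun x => sq_nonneg _
  have hIB2 : 0 ≤ IB2 := integral_nonneg fun x => sq_nonneg _
  have key := key_ineq (3 * θ) ((1 - θ) / 2)
    (Real.sqrt IA) (Real.sqrt IA1) (Real.sqrt IA2)
    (Real.sqrt IB) (Real.sqrt IB1) (Real.sqrt IB2)
    (by positivity) (by linarith)
    (Real.sqrt_nonneg _) (Real.sqrt_nonneg _) (Real.sqrt_nonneg _) (Real.sqrt_nonneg _)
    (Real.sqrt_nonneg _) (Real.sqrt_nonneg _) hAt hBt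
  rw [Real.sq_sqrt hIA, Real.sq_sqrt hIA1, Real.sq_sqrt hIA2,
      Real.sq_sqrt hIB, Real.sq_sqrt hIB1, Real.sq_sqrt hIB2] at key
  have e1 : dtheta μ θ X Z f k = Real.sqrt (3 * θ * IA + (1 - θ) / 2 * IB) := by
    rw [dtheta, d1sq, d0sq, ← hIAdef, ← hIBdef]; congr 1; ring
  have e2 : dtheta μ θ X Y f g = Real.sqrt (3 * θ * IA1 + (1 - θ) / 2 * IB1) := by
    rw [dtheta, d1sq, d0sq, ← hIA1def, ← hIB1def]; congr 1; ring
  have e3 : dtheta μ θ Y Z g k = Real.sqrt (3 * θ * IA2 + (1 - θ) / 2 * IB2) := by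
    rw [dtheta, d1sq, d0sq, ← hIA2def, ← hIB2def]; congr 1; ring
  rw [e1, e2, e3]
  exact key
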